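/- Let H be a complex Hilbert space and let T be a densely defined symmetric unbounded operator on H. Assume that for every μ > 0 there is a bounded operator B_μ on H with ‖B_μ‖ ≤ 1/μ such that B_μ x lies in the domain of T and T(B_μ x) − iμ·B_μ x = x for all x ∈ H, and B_μ(Tψ − iμψ) = ψ for all ψ in the domain of T (i.e. B_μ = (T − iμ)⁻¹). Let R be an unbounded operator on H whose domain contains the domain of T, and assume there is a compact bounded operator K on H with K x = R(B₁ x) for all x ∈ H (i.e. R(T − i)⁻¹ is compact). Then for every ε > 0 there exists C ≥ 0 such that ‖Rψ‖ ≤ ε‖Tψ‖ + C‖ψ‖ for all ψ in the domain of T. -/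

import Mathlib

open scoped InnerProductSpace

-- Rank-one estimate
lemma aux_rank_one {H : Type*} [NormedAddCommGroup H] [InnerProductSpace ℂ H] [CompleteSpace H]
    (A : H →L[ℂ] H) (hinj : ∀ x, A x = 0 → x = 0) (e : H) {ε : ℝ} (hε : 0 < ε) :
    ∃ C : ℝ, 0 ≤ C ∧ ∀ x : H, ‖(⟪e, x⟫_ℂ : ℂ)‖ ≤ ε * ‖x‖ + C * ‖A x‖ := by
  set S : Submodule ℂ H := LinearMap.range (ContinuousLinearMap.adjoint A : H →ₗ[ℂ] H)
  have hSorth : Sᗮ = ⊥ := by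
    rw [Submodule.eq_bot_iff]
    intro w hw
    have hAw : A w = 0 := by
      have h := fun v : H => hw (ContinuousLinearMap.adjoint A v) ⟨v, rfl⟩
      have h2 : ∀ v : H, ⟪v, A w⟫_ℂ = 0 := by
        intro v
        rw [← ContinuousLinearMap.adjoint_inner_left]
        exact h v
      simpa using h2 (A w)
    exact hinj w hAw
  have hdense : S.topologicalClosure = ⊤ := by
    rw [← Submodule.orthogonal_orthogonal_eq_closure, hSorth, Submodule.bot_orthogonal_eq_top]
  have he : e ∈ closure (S : Set H) := by
    have : e ∈ (S.topologicalClosure : Set H) := by rw [hdense]; trivial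
    exact this
  obtain ⟨s, hs, hse⟩ := Metric.mem_closure_iff.mp he ε hε
  obtain ⟨v, rfl⟩ := hs
  refine ⟨‖v‖, norm_nonneg v, fun x => ?_⟩
  have h1 : ⟪e, x⟫_ℂ = ⟪e - ContinuousLinearMap.adjoint A v, x⟫_ℂ + ⟪v, A x⟫_ℂ := by
    rw [← ContinuousLinearMap.adjoint_inner_left, ← inner_add_left]
    rw [sub_add_cancel]
  rw [h1]
  calc ‖⟪e - ContinuousLinearMap.adjoint A v, x⟫_ℂ + ⟪v, A x⟫_ℂ‖
      ≤ ‖⟪e - ContinuousLinearMap.adjoint A v, x⟫_ℂ‖ + ‖⟪v, A x⟫_ℂ‖ := norm_add_le _ _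
    _ ≤ ‖e - ContinuousLinearMap.adjoint A v‖ * ‖x‖ + ‖v‖ * ‖A x‖ := by
        gcongr <;> exact norm_inner_le_norm _ _
    _ ≤ ε * ‖x‖ + ‖v‖ * ‖A x‖ := by
        gcongr
        simpa [dist_eq_norm] using hse.le

-- Compact operator estimate
lemma aux_compact {H : Type*} [NormedAddCommGroup H] [InnerProductSpace ℂ H] [CompleteSpace H]
    (A K : H →L[ℂ] H) (hinj : ∀ x, A x = 0 → x = 0) (hK : IsCompactOperator K)
    {ε : ℝ} (hε : 0 < ε) :
    ∃ C : ℝ, 0 ≤ C ∧ ∀ x : H, ‖K x‖ ≤ ε * ‖x‖ + C * ‖A x‖ := by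
  by_contra hcon
  push_neg at hcon
  -- for each n, get a unit vector u n with ε + n * ‖A (u n)‖ < ‖K (u n)‖
  have key : ∀ n : ℕ, ∃ u : H, ‖u‖ = 1 ∧ ε + n * ‖A u‖ < ‖K u‖ := by
    intro n
    obtain ⟨x, hx⟩ := hcon n (Nat.cast_nonneg n)
    have hx0 : x ≠ 0 := by
      rintro rfl
      simp at hx
    have hxpos : (0 : ℝ) < ‖x‖ := norm_pos_iff.mpr hx0
    refine ⟨((‖x‖ : ℂ))⁻¹ • x, ?_, ?_⟩
    · rw [norm_smul, norm_inv, Complex.norm_real, Real.norm_eq_abs, abs_norm,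
        inv_mul_cancel₀ (norm_ne_zero_iff.mpr hx0)]
    · rw [map_smul, map_smul, norm_smul, norm_smul, norm_inv, Complex.norm_real,
        Real.norm_eq_abs, abs_norm]
      have h := mul_lt_mul_of_pos_left hx (inv_pos.mpr hxpos)
      calc ε + ↑n * (‖x‖⁻¹ * ‖A x‖) = ‖x‖⁻¹ * (ε * ‖x‖ + ↑n * ‖A x‖) := by
            field_simp
        _ < ‖x‖⁻¹ * ‖K x‖ := h
  choose u hu1 hu2 using key
  have huball : ∀ n, u n ∈ Metric.closedBall (0 : H) 1 := by
    intro n; rw [Metric.mem_closedBall, dist_zero_right, hu1]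
  have hKbd : ∀ n, ‖K (u n)‖ ≤ ‖K‖ := by
    intro n
    calc ‖K (u n)‖ ≤ ‖K‖ * ‖u n‖ := K.le_opNorm _
      _ = ‖K‖ := by rw [hu1, mul_one]
  -- A (u n) → 0
  have hAu : Filter.Tendsto (fun n : ℕ => ‖A (u n)‖) Filter.atTop (nhds 0) := by
    have hbound : ∀ n : ℕ, 1 ≤ n → ‖A (u n)‖ ≤ ‖K‖ / n := by
      intro n hn
      have hnpos : (0 : ℝ) < n := by exact_mod_cast hn
      rw [le_div_iff₀ hnpos]
      have := (hu2 n).le.trans (hKbd n)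
      nlinarith [norm_nonneg (A (u n))]
    have h0 : Filter.Tendsto (fun n : ℕ => ‖K‖ / (n : ℝ)) Filter.atTop (nhds 0) :=
      tendsto_const_div_atTop_nhds_zero_nat _
    apply squeeze_zero' (Filter.Eventually.of_forall fun n => norm_nonneg _)
      (Filter.eventually_atTop.mpr ⟨1, hbound⟩) h0
  -- compactness: K (u ·) has a convergent subsequence
  have hcpt : IsCompact (closure (K '' Metric.closedBall 0 1)) :=
    hK.isCompact_closure_image_closedBall 1
  have hmem : ∀ n, K (u n) ∈ closure (K '' Metric.closedBall 0 1) :=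
    fun n => subset_closure ⟨u n, huball n, rfl⟩
  obtain ⟨y, -, φ, hφ, hy⟩ := hcpt.tendsto_subseq hmem
  -- ‖y‖ ≥ ε
  have hεy : ε ≤ ‖y‖ := by
    have h1 : Filter.Tendsto (fun m => ‖K (u (φ m))‖) Filter.atTop (nhds ‖y‖) :=
      (continuous_norm.tendsto y).comp hy
    apply le_of_tendsto_of_tendsto' tendsto_const_nhds h1
    intro m
    have := hu2 (φ m)
    nlinarith [norm_nonneg (A (u (φ m))), Nat.cast_nonneg (α := ℝ) (φ m)]
  -- but ⟪e, y⟫ = 0 for all e, so y = 0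
  have hy0 : y = 0 := by
    have hinner : ∀ e : H, ⟪e, y⟫_ℂ = 0 := by
      intro e
      have hlim : Filter.Tendsto (fun m => ⟪e, K (u (φ m))⟫_ℂ) Filter.atTop (nhds ⟪e, y⟫_ℂ) :=
        ((continuous_const.inner continuous_id).tendsto y).comp hy
      have hsmall : ∀ δ : ℝ, 0 < δ → ‖⟪e, y⟫_ℂ‖ ≤ δ := by
        intro δ hδ
        obtain ⟨C, hC0, hC⟩ := aux_rank_one A hinj ((ContinuousLinearMap.adjoint K) e) hδ
        have hbd : ∀ m, ‖⟪e, K (u (φ m))⟫_ℂ‖ ≤ δ + C * ‖A (u (φ m))‖ := by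
          intro m
          have := hC (u (φ m))
          rw [ContinuousLinearMap.adjoint_inner_left] at this
          calc ‖⟪e, K (u (φ m))⟫_ℂ‖ ≤ δ * ‖u (φ m)‖ + C * ‖A (u (φ m))‖ := this
            _ = δ + C * ‖A (u (φ m))‖ := by rw [hu1, mul_one]
        have hrhs : Filter.Tendsto (fun m => δ + C * ‖A (u (φ m))‖) Filter.atTop (nhds δ) := by
          have : Filter.Tendsto (fun m => ‖A (u (φ m))‖) Filter.atTop (nhds 0) :=
            hAu.comp hφ.tendsto_atTop
          simpa using tendsto_const_nhds.add (this.const_mul C)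
        exact le_of_tendsto_of_tendsto' ((continuous_norm.tendsto _).comp hlim) hrhs hbd
      have hle : ‖⟪e, y⟫_ℂ‖ ≤ 0 := by
        by_contra h
        push_neg at h
        linarith [hsmall (‖⟪e, y⟫_ℂ‖ / 2) (by linarith)]
      exact norm_le_zero_iff.mp hle
    have := hinner y
    rwa [inner_self_eq_zero] at this
  rw [hy0, norm_zero] at hεy
  linarith

/-- **Proposition A.6 (Hilbert-space case).** Let `T` be a densely defined symmetric operator on a
complex Hilbert space admitting resolvents `B μ = (T − iμ)⁻¹` with `‖B μ‖ ≤ 1/μ` for all `μ > 0`,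
and let `R` be an operator with `dom T ⊆ dom R` such that `R (T − i)⁻¹` is compact.  Then `R` is
relatively `T`-bounded with arbitrarily small relative bound: for every `ε > 0` there exists
`C ≥ 0` with `‖R ψ‖ ≤ ε ‖T ψ‖ + C ‖ψ‖` for all `ψ` in the domain of `T`. -/
theorem rel_compact_implies_rel_bounded_small_bound
    {H : Type*} [NormedAddCommGroup H] [InnerProductSpace ℂ H] [CompleteSpace H]
    (T R : H →ₗ.[ℂ] H)
    (hdense : Dense (T.domain : Set H))
    (hsymm : ∀ ψ φ : T.domain, ⟪T ψ, (φ : H)⟫_ℂ = ⟪(ψ : H), T φ⟫_ℂ)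
    (B : ℝ → H →L[ℂ] H)
    (hBnorm : ∀ μ : ℝ, 0 < μ → ‖B μ‖ ≤ 1 / μ)
    (hBmem : ∀ μ : ℝ, 0 < μ → ∀ x : H, B μ x ∈ T.domain)
    (hBright : ∀ (μ : ℝ) (hμ : 0 < μ) (x : H),
      T ⟨B μ x, hBmem μ hμ x⟩ - (Complex.I * (μ : ℂ)) • B μ x = x)
    (hBleft : ∀ (μ : ℝ), 0 < μ → ∀ ψ : T.domain,
      B μ (T ψ - (Complex.I * (μ : ℂ)) • (ψ : H)) = (ψ : H))
    (hdom : T.domain ≤ R.domain)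
    (K : H →L[ℂ] H) (hK : IsCompactOperator K)
    (hKR : ∀ x : H, K x = R ⟨B 1 x, hdom (hBmem 1 one_pos x)⟩) :
    ∀ ε : ℝ, 0 < ε → ∃ C : ℝ, 0 ≤ C ∧ ∀ ψ : T.domain,
      ‖R ⟨(ψ : H), hdom ψ.2⟩‖ ≤ ε * ‖T ψ‖ + C * ‖(ψ : H)‖ := by
  have hinj : ∀ x : H, B 1 x = 0 → x = 0 := by
    intro x hx
    have h := hBright 1 one_pos x
    have h0 : (⟨B 1 x, hBmem 1 one_pos x⟩ : T.domain) = 0 := Subtype.ext (by simp [hx])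
    rw [h0, T.map_zero, hx, smul_zero, sub_zero] at h
    exact h.symm
  intro ε hε
  obtain ⟨C, hC0, hC⟩ := aux_compact (B 1) K hinj hK hε
  refine ⟨ε + C, by linarith, fun ψ => ?_⟩
  set x : H := T ψ - (Complex.I * ((1 : ℝ) : ℂ)) • (ψ : H) with hxdef
  have hB1x : B 1 x = (ψ : H) := hBleft 1 one_pos ψ
  have hKx : K x = R ⟨(ψ : H), hdom ψ.2⟩ := by
    rw [hKR x]
    exact congrArg R (Subtype.ext hB1x)
  have hxnorm : ‖x‖ ≤ ‖T ψ‖ + ‖(ψ : H)‖ := by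
    calc ‖x‖ ≤ ‖T ψ‖ + ‖(Complex.I * ((1 : ℝ) : ℂ)) • (ψ : H)‖ := norm_sub_le _ _
      _ = ‖T ψ‖ + ‖(ψ : H)‖ := by rw [norm_smul]; simp
  have := hC x
  rw [hKx, hB1x] at this
  calc ‖R ⟨(ψ : H), hdom ψ.2⟩‖ ≤ ε * ‖x‖ + C * ‖(ψ : H)‖ := this
    _ ≤ ε * (‖T ψ‖ + ‖(ψ : H)‖) + C * ‖(ψ : H)‖ := by nlinarith
    _ = ε * ‖T ψ‖ + (ε + C) * ‖(ψ : H)‖ := by ring
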